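/- Let I = λx.x and J = (Θ G), where Θ = (λx.λy.(y ((x x) y))) (λx.λy.(y ((x x) y))) is Turing's fixed point combinator and G = λx.λy.λz.(y (x z)). Then I and J are operationally equivalent: for every context C (a λ-term with a hole), C[I] is solvable if and only if C[J] is solvable. -/

import Mathlib

/-- Untyped λ-terms in de Bruijn notation. -/
inductive Lam : Type
  | var : ℕ → Lam
  | lam : Lam → Lam
  | app : Lam → Lam → Lam

namespace Lam

/-- Lift (shift by one) the de Bruijn indices ≥ `d`. -/
def lift : Lam → ℕ → Lam
  | var n, d => if n < d then var n else var (n + 1)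
  | lam u, d => lam (lift u (d + 1))
  | app u v, d => app (lift u d) (lift v d)

/-- Capture-avoiding substitution `t[s/k]`. -/
def subst : Lam → ℕ → Lam → Lam
  | var n, k, s => if n = k then s else if k < n then var (n - 1) else var n
  | lam u, k, s => lam (subst u (k + 1) (lift s 0))
  | app u v, k, s => app (subst u k s) (subst v k s)

/-- Head reduction: `λx̄.((λx.U) V) V₁ ... Vₖ →t λx̄.(U[V/x]) V₁ ... Vₖ`. -/
inductive Head : Lam → Lam → Prop
  | beta (u v : Lam) : Head (app (lam u) v) (subst u 0 v)
  | appL {u u' : Lam} (v : Lam) : Head u u' → (∀ w, u ≠ lam w) →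
      Head (app u v) (app u' v)
  | abs {u u' : Lam} : Head u u' → Head (lam u) (lam u')

/-- Terms of the form `x V₁ ... Vₖ` for a variable `x`. -/
inductive VarApp : Lam → Prop
  | var (n : ℕ) : VarApp (var n)
  | app {u : Lam} (v : Lam) : VarApp u → VarApp (app u v)

/-- Head normal forms: `λx₁...λxₘ.(x V₁ ... Vₖ)`. -/
inductive Hnf : Lam → Prop
  | base {t : Lam} : VarApp t → Hnf t
  | lam {t : Lam} : Hnf t → Hnf (lam t)

/-- A λ-term is solvable iff its head reduction reaches a head normal form. -/
def Solvable (t : Lam) : Prop :=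
  ∃ t', Relation.ReflTransGen Head t t' ∧ Hnf t'

end Lam

/-- Contexts: λ-terms with a hole. -/
inductive Ctx : Type
  | hole : Ctx
  | lam : Ctx → Ctx
  | appL : Ctx → Lam → Ctx
  | appR : Lam → Ctx → Ctx

/-- Plugging a term into the hole of a context (possibly capturing variables:
in de Bruijn notation, the plugged term is not lifted under binders). -/
def Ctx.plug : Ctx → Lam → Lam
  | .hole, t => t
  | .lam c, t => .lam (c.plug t)
  | .appL c v, t => .app (c.plug t) v
  | .appR u c, t => .app u (c.plug t)

/-- `I = λx.x`. -/
def Iterm : Lam := .lam (.var 0)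

/-- `δ = λx.λy.(y ((x x) y))`. -/
def deltaTerm : Lam :=
  .lam (.lam (.app (.var 0) (.app (.app (.var 1) (.var 1)) (.var 0))))

/-- Turing's fixed point combinator `Θ = δ δ`. -/
def thetaTerm : Lam := .app deltaTerm deltaTerm

/-- `G = λx.λy.λz.(y (x z))`. -/
def Gterm : Lam := .lam (.lam (.lam (.app (.var 1) (.app (.var 2) (.var 0)))))

/-- `J = (Θ G)`. -/
def Jterm : Lam := .app thetaTerm Gterm

namespace Lam

theorem lift_lift (t : Lam) : ∀ d d', d' ≤ d → lift (lift t d) d' = lift (lift t d') (d+1) := by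
  induction t with
  | var n =>
    intro d d' h; simp only [lift]; split_ifs <;> simp only [lift] <;> split_ifs <;>
      first | rfl | omega | (congr 1; omega)
  | lam u ih =>
    intro d d' h; simp only [lift]; rw [ih (d+1) (d'+1) (by omega)]
  | app u v ihu ihv =>
    intro d d' h; simp only [lift, ihu _ _ h, ihv _ _ h]

theorem subst_lift (t : Lam) : ∀ d s, subst (lift t d) d s = t := by
  induction t with
  | var n =>
    intro d s; simp only [lift]; split_ifs with h <;> simp only [subst] <;>
      split_ifs <;> first | rfl | omega | (congr 1; omega)
  | lam u ih => intro d s; simp only [lift, subst, ih]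
  | app u v ihu ihv => intro d s; simp only [lift, subst, ihu, ihv]

theorem lift_subst_le (t : Lam) : ∀ d k s, d ≤ k →
    lift (subst t k s) d = subst (lift t d) (k+1) (lift s d) := by
  induction t with
  | var n =>
    intro d k s h
    simp only [subst, lift]
    split_ifs <;> simp only [subst, lift] <;> split_ifs <;>
      first | rfl | omega | (congr 1; omega)
  | lam u ih =>
    intro d k s h
    simp only [lift, subst]
    rw [ih (d+1) (k+1) _ (by omega), ← lift_lift s d 0 (by omega)]
  | app u v ihu ihv =>
    intro d k s h; simp only [lift, subst, ihu _ _ _ h, ihv _ _ _ h]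

theorem lift_subst_ge (t : Lam) : ∀ d k s, k ≤ d →
    lift (subst t k s) d = subst (lift t (d+1)) k (lift s d) := by
  induction t with
  | var n =>
    intro d k s h
    simp only [subst, lift]
    split_ifs <;> simp only [subst, lift] <;> split_ifs <;>
      first | rfl | omega | (congr 1; omega)
  | lam u ih =>
    intro d k s h
    simp only [lift, subst]
    rw [ih (d+1) (k+1) _ (by omega), ← lift_lift s d 0 (by omega)]
  | app u v ihu ihv =>
    intro d k s h; simp only [lift, subst, ihu _ _ _ h, ihv _ _ _ h]

theorem subst_subst (b : Lam) : ∀ j k v s, j ≤ k →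
    subst (subst b j v) k s = subst (subst b (k+1) (lift s j)) j (subst v k s) := by
  induction b with
  | var n =>
    intro j k v s h
    simp only [subst]
    split_ifs <;> (try simp only [subst]) <;> (try split_ifs) <;>
      first | rfl | omega | (congr 1; omega) | rw [subst_lift]
  | lam u ih =>
    intro j k v s h
    simp only [subst]
    rw [ih (j+1) (k+1) _ _ (by omega), ← lift_lift s j 0 (by omega),
      ← lift_subst_le v 0 k s (by omega)]
  | app u v ihu ihv =>
    intro j k v' s h; simp only [subst, ihu _ _ _ _ h, ihv _ _ _ _ h]

end Lam
namespace Lam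

open Relation

theorem VarApp.not_head {t u : Lam} (hv : VarApp t) (h : Head t u) : False := by
  induction hv generalizing u with
  | var n => cases h
  | app v hv ih =>
    cases h with
    | beta u v => cases hv
    | appL v h _ => exact ih h

theorem Hnf.not_head {t u : Lam} (hv : Hnf t) (h : Head t u) : False := by
  induction hv generalizing u with
  | base hv => exact hv.not_head h
  | lam _ ih => cases h with | abs h => exact ih h

theorem Head.det {t u v : Lam} (h1 : Head t u) (h2 : Head t v) : u = v := by
  induction h1 generalizing v with
  | beta a b =>
    cases h2 with
    | beta => rfl
    | appL _ h hn => exact absurd rfl (hn _)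
  | appL b h hn ih =>
    cases h2 with
    | beta => exact absurd rfl (hn _)
    | appL _ h2 _ => rw [ih h2]
  | abs h ih =>
    cases h2 with
    | abs h2 => rw [ih h2]

theorem Head.subst_Head {t u : Lam} (h : Head t u) :
    ∀ k s, Head (subst t k s) (subst u k s) := by
  induction h with
  | beta a b =>
    intro k s
    rw [subst_subst a 0 k b s (by omega)]
    exact Head.beta _ _
  | appL v h hn ih =>
    intro k s
    simp only [subst]
    refine Head.appL _ (ih k s) ?_
    cases h with
    | beta a b => simp [subst]
    | appL v h hn2 => simp [subst]
    | abs h => exact absurd rfl (hn _)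
  | abs h ih =>
    intro k s
    exact Head.abs (ih (k+1) (lift s 0))

theorem Head.lift_Head {t u : Lam} (h : Head t u) :
    ∀ d, Head (lift t d) (lift u d) := by
  induction h with
  | beta a b =>
    intro d
    rw [lift_subst_ge a d 0 b (by omega)]
    exact Head.beta _ _
  | appL v h hn ih =>
    intro d
    simp only [lift]
    refine Head.appL _ (ih d) ?_
    cases h with
    | beta a b => simp [lift]
    | appL v h hn2 => simp [lift]
    | abs h => exact absurd rfl (hn _)
  | abs h ih => intro d; exact Head.abs (ih (d+1))

theorem head_total (t : Lam) : Hnf t ∨ ∃ u, Head t u := by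
  induction t with
  | var n => exact Or.inl (Hnf.base (VarApp.var n))
  | lam u ih =>
    rcases ih with h | ⟨u', h⟩
    · exact Or.inl h.lam
    · exact Or.inr ⟨_, h.abs⟩
  | app a b iha _ =>
    match a, iha with
    | .lam a₀, _ => exact Or.inr ⟨_, Head.beta a₀ b⟩
    | .var n, _ => exact Or.inl (Hnf.base ((VarApp.var n).app b))
    | .app a1 a2, Or.inl h =>
      cases h with
      | base hv => exact Or.inl (Hnf.base (hv.app b))
    | .app a1 a2, Or.inr ⟨u, h⟩ =>
      exact Or.inr ⟨_, h.appL b (by intro w hw; exact Lam.noConfusion hw)⟩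

theorem VarApp.lift {t : Lam} (h : VarApp t) (d : ℕ) : VarApp (Lam.lift t d) := by
  induction h with
  | var n => simp only [Lam.lift]; split_ifs <;> exact VarApp.var _
  | app v hv ih => exact ih.app _

theorem Hnf.lift_Hnf {t : Lam} (h : Hnf t) (d : ℕ) : Hnf (Lam.lift t d) := by
  induction h generalizing d with
  | base hv => exact Hnf.base (hv.lift d)
  | lam _ ih => exact (ih (d+1)).lam

theorem lift_eq_lam {t c : Lam} {d : ℕ} (h : Lam.lift t d = .lam c) :
    ∃ c₀, t = .lam c₀ ∧ c = Lam.lift c₀ (d+1) := by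
  cases t with
  | var n => simp only [Lam.lift] at h; split_ifs at h <;> cases h
  | lam u => exact ⟨u, rfl, by cases h; rfl⟩
  | app u v => cases h

/-- head steps of a lifted term reflect. -/
theorem head_lift_rev {t X : Lam} {d : ℕ} (h : Head (Lam.lift t d) X) :
    ∃ u, Head t u ∧ X = Lam.lift u d := by
  rcases head_total t with ht | ⟨u, hu⟩
  · exact absurd h (ht.lift_Hnf d).not_head
  · exact ⟨u, hu, (Head.det h (hu.lift_Head d)).symm ▸ rfl⟩

-- star congruences
theorem star_abs {a b : Lam} (h : ReflTransGen Head a b) :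
    ReflTransGen Head (.lam a) (.lam b) :=
  ReflTransGen.lift _ (fun _ _ h => h.abs) _ _ h

theorem star_subst {a b : Lam} (h : ReflTransGen Head a b) (k : ℕ) (s : Lam) :
    ReflTransGen Head (subst a k s) (subst b k s) :=
  ReflTransGen.lift _ (fun _ _ h => h.subst_Head k s) _ _ h

theorem star_lift {a b : Lam} (h : ReflTransGen Head a b) (d : ℕ) :
    ReflTransGen Head (lift a d) (lift b d) :=
  ReflTransGen.lift _ (fun _ _ h => h.lift_Head d) _ _ h

theorem lam_star_inv {a x : Lam} (h : ReflTransGen Head (.lam a) x) :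
    ∃ b, x = .lam b ∧ ReflTransGen Head a b := by
  induction h with
  | refl => exact ⟨a, rfl, ReflTransGen.refl⟩
  | tail _ h ih =>
    rcases ih with ⟨b, rfl, hb⟩
    cases h with
    | abs h => exact ⟨_, rfl, hb.tail h⟩

/-- key splitting lemma for reductions in function position -/
theorem head_split {a a₂ : Lam} (h : ReflTransGen Head a a₂) (v : Lam) :
    (∃ p, a₂ = .lam p ∧ ReflTransGen Head (.app a v) (subst p 0 v)) ∨
    ((∀ w, a₂ ≠ .lam w) ∧ ReflTransGen Head (.app a v) (.app a₂ v)) := by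
  induction h using ReflTransGen.head_induction_on with
  | refl =>
    cases a₂ with
    | lam p => exact Or.inl ⟨p, rfl, ReflTransGen.single (Head.beta p v)⟩
    | var n => exact Or.inr ⟨fun w => Lam.noConfusion, ReflTransGen.refl⟩
    | app x y => exact Or.inr ⟨fun w => Lam.noConfusion, ReflTransGen.refl⟩
  | head h hrest ih =>
    rename_i c b
    cases c with
    | var n => cases h
    | lam m =>
      rcases lam_star_inv (ReflTransGen.head h hrest) with ⟨p, hp, hpr⟩
      subst hp
      exact Or.inl ⟨p, rfl, ReflTransGen.head (Head.beta m v) (star_subst hpr 0 v)⟩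
    | app x y =>
      rcases ih with ⟨p, rfl, hp⟩ | ⟨hn, hs⟩
      · exact Or.inl ⟨p, rfl,
          ReflTransGen.head (h.appL v (fun w => Lam.noConfusion)) hp⟩
      · exact Or.inr ⟨hn,
          ReflTransGen.head (h.appL v (fun w => Lam.noConfusion)) hs⟩

theorem head_appsim {a p : Lam} (h : ReflTransGen Head a (.lam p)) (v : Lam) :
    ReflTransGen Head (.app a v) (subst p 0 v) := by
  rcases head_split h v with ⟨p', hp, hs⟩ | ⟨hn, _⟩
  · cases hp; exact hs
  · exact absurd rfl (hn p)

end Lam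
namespace Lam

open Relation

theorem solvable_star {t u : Lam} (h : ReflTransGen Head t u) (hu : Solvable u) :
    Solvable t := by
  rcases hu with ⟨v, hv, hnf⟩
  exact ⟨v, h.trans hv, hnf⟩

theorem solvable_lam {t : Lam} (h : Solvable t) : Solvable (.lam t) := by
  rcases h with ⟨v, hv, hnf⟩
  exact ⟨.lam v, star_abs hv, hnf.lam⟩

/-- reaches a hnf within n steps -/
def SolvN : ℕ → Lam → Prop
  | 0, t => Hnf t
  | n+1, t => Hnf t ∨ ∃ u, Head t u ∧ SolvN n u

theorem SolvN.mono {n : ℕ} {t : Lam} (h : SolvN n t) : SolvN (n+1) t := by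
  induction n generalizing t with
  | zero => exact Or.inl h
  | succ n ih =>
    rcases h with h | ⟨u, hu, hs⟩
    · exact Or.inl h
    · exact Or.inr ⟨u, hu, ih hs⟩

theorem solvable_iff_solvN {t : Lam} : Solvable t ↔ ∃ n, SolvN n t := by
  constructor
  · rintro ⟨v, hv, hnf⟩
    induction hv using ReflTransGen.head_induction_on with
    | refl => exact ⟨0, hnf⟩
    | head h _ ih =>
      rcases ih with ⟨n, hn⟩
      exact ⟨n+1, Or.inr ⟨_, h, hn⟩⟩
  · rintro ⟨n, hn⟩
    induction n generalizing t with
    | zero => exact ⟨t, ReflTransGen.refl, hn⟩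
    | succ n ih =>
      rcases hn with h | ⟨u, hu, hs⟩
      · exact ⟨t, ReflTransGen.refl, h⟩
      · exact solvable_star (ReflTransGen.single hu) (ih hs)

theorem SolvN.head {n : ℕ} {t u : Lam} (h : SolvN (n+1) t) (hd : Head t u) :
    SolvN n u := by
  rcases h with h | ⟨u', hu', hs⟩
  · exact absurd hd h.not_head
  · rwa [hd.det hu']

theorem SolvN.star : ∀ {t u : Lam}, ReflTransGen Head t u → ∀ n, SolvN n t → SolvN n u := by
  intro t u hs
  induction hs using Relation.ReflTransGen.head_induction_on with
  | refl => exact fun n h => h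
  | head hd rest ih =>
    intro n h
    cases n with
    | zero => exact absurd hd h.not_head
    | succ n => exact (ih n (h.head hd)).mono

end Lam
open Lam Relation

/-- `B = λy. y (Θ y)`, the one-step reduct of `Θ`. -/
def Bterm : Lam := .lam (.app (.var 0) (.app thetaTerm (.var 0)))

/-- `J3 = λy.λz. y (J z)`, a head normal form of `J`. -/
def J3term : Lam := .lam (.lam (.app (.var 1) (.app Jterm (.var 0))))

/-- the J-eta-expansion gadget `λz. (lift t) (J z)` -/
def etaJ (t : Lam) : Lam := .lam (.app (t.lift 0) (.app Jterm (.var 0)))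

theorem lift_delta (d : ℕ) : deltaTerm.lift d = deltaTerm := by
  simp only [deltaTerm, lift]; norm_num

theorem lift_theta (d : ℕ) : thetaTerm.lift d = thetaTerm := by
  simp only [thetaTerm, deltaTerm, lift]; norm_num

theorem lift_G (d : ℕ) : Gterm.lift d = Gterm := by
  simp only [Gterm, lift]; norm_num

theorem lift_J (d : ℕ) : Jterm.lift d = Jterm := by
  simp only [Jterm, thetaTerm, deltaTerm, Gterm, lift]; norm_num

theorem lift_B (d : ℕ) : Bterm.lift d = Bterm := by
  simp only [Bterm, thetaTerm, deltaTerm, lift]; norm_num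

theorem lift_J3 (d : ℕ) : J3term.lift d = J3term := by
  simp only [J3term, Jterm, thetaTerm, deltaTerm, Gterm, lift]; norm_num

theorem lift_I (d : ℕ) : Iterm.lift d = Iterm := by
  simp only [Iterm, lift]; norm_num

theorem subst_delta (k : ℕ) (s : Lam) : deltaTerm.subst k s = deltaTerm := by
  simp only [deltaTerm, subst]; norm_num

theorem subst_theta (k : ℕ) (s : Lam) : thetaTerm.subst k s = thetaTerm := by
  simp only [thetaTerm, deltaTerm, subst]; norm_num

theorem subst_G (k : ℕ) (s : Lam) : Gterm.subst k s = Gterm := by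
  simp only [Gterm, subst]; norm_num

theorem subst_J (k : ℕ) (s : Lam) : Jterm.subst k s = Jterm := by
  simp only [Jterm, thetaTerm, deltaTerm, Gterm, subst]; norm_num

theorem subst_B (k : ℕ) (s : Lam) : Bterm.subst k s = Bterm := by
  simp only [Bterm, thetaTerm, deltaTerm, subst]; norm_num

theorem subst_J3 (k : ℕ) (s : Lam) : J3term.subst k s = J3term := by
  simp only [J3term, Jterm, thetaTerm, deltaTerm, Gterm, subst]; norm_num

theorem subst_I (k : ℕ) (s : Lam) : Iterm.subst k s = Iterm := by
  simp only [Iterm, subst]; norm_num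

theorem step_theta : Head thetaTerm Bterm := by
  have h := Head.beta (.lam (.app (.var 0) (.app (.app (.var 1) (.var 1)) (.var 0)))) deltaTerm
  have e : Lam.subst (.lam (.app (.var 0) (.app (.app (.var 1) (.var 1)) (.var 0)))) 0 deltaTerm
      = Bterm := by rfl
  rw [e] at h; exact h

theorem theta_nonlam : ∀ w, thetaTerm ≠ .lam w := fun w => Lam.noConfusion

theorem J_nonlam : ∀ w, Jterm ≠ .lam w := fun w => Lam.noConfusion

theorem step_J1 : Head Jterm (.app Bterm Gterm) :=
  Head.appL Gterm step_theta theta_nonlam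

theorem step_J2 : Head (.app Bterm Gterm) (.app Gterm Jterm) := by
  have h := Head.beta (.app (.var 0) (.app thetaTerm (.var 0))) Gterm
  have e : Lam.subst (.app (.var 0) (.app thetaTerm (.var 0))) 0 Gterm
      = .app Gterm Jterm := by rfl
  rw [e] at h; exact h

theorem step_J3 : Head (.app Gterm Jterm) J3term := by
  have h := Head.beta (.lam (.lam (.app (.var 1) (.app (.var 2) (.var 0))))) Jterm
  have e : Lam.subst (.lam (.lam (.app (.var 1) (.app (.var 2) (.var 0))))) 0 Jterm
      = J3term := by rfl
  rw [e] at h; exact h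

theorem star_J_J3 : ReflTransGen Head Jterm J3term :=
  ReflTransGen.head step_J1 (ReflTransGen.head step_J2 (ReflTransGen.single step_J3))

theorem step_J4 (t : Lam) : Head (.app J3term t) (etaJ t) := by
  have h := Head.beta (.lam (.app (.var 1) (.app Jterm (.var 0)))) t
  have e : Lam.subst (.lam (.app (.var 1) (.app Jterm (.var 0)))) 0 t = etaJ t := by
    simp only [subst, lift, subst_J, etaJ]
    norm_num
  rw [e] at h; exact h

/-- `J t` reduces in four head steps to `etaJ t`. -/
theorem star_appJ (t : Lam) : ReflTransGen Head (.app Jterm t) (etaJ t) := by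
  refine ReflTransGen.head (step_J1.appL t J_nonlam) ?_
  refine ReflTransGen.head (step_J2.appL t (fun w => Lam.noConfusion)) ?_
  refine ReflTransGen.head (step_J3.appL t (fun w => Lam.noConfusion)) ?_
  exact ReflTransGen.single (step_J4 t)

/-- beta-reducing the eta gadget -/
theorem step_etaJ (t v : Lam) : Head (.app (etaJ t) v) (.app t (.app Jterm v)) := by
  have h := Head.beta (.app (t.lift 0) (.app Jterm (.var 0))) v
  have e : Lam.subst (.app (t.lift 0) (.app Jterm (.var 0))) 0 v = .app t (.app Jterm v) := by
    simp only [subst, subst_J, subst_lift]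
    norm_num
  rw [e] at h; exact h

/-- iterated application -/
def apps : Lam → List Lam → Lam
  | t, [] => t
  | t, a :: as => apps (.app t a) as

theorem head_apps {x y : Lam} (h : Head x y) (hn : ∀ w, x ≠ .lam w) :
    ∀ args, Head (apps x args) (apps y args)
  | [] => h
  | a :: as => head_apps (h.appL a hn) (fun w => Lam.noConfusion) as

theorem varApp_apps {t : Lam} (h : VarApp t) : ∀ args, VarApp (apps t args)
  | [] => h
  | a :: as => varApp_apps (h.app a) as
theorem lift_app (u v : Lam) (d : ℕ) : (Lam.app u v).lift d = .app (u.lift d) (v.lift d) := rfl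
theorem lift_lam (u : Lam) (d : ℕ) : (Lam.lam u).lift d = .lam (u.lift (d+1)) := rfl
theorem subst_app (u v : Lam) (k : ℕ) (s : Lam) :
    (Lam.app u v).subst k s = .app (u.subst k s) (v.subst k s) := rfl
theorem subst_lam (u : Lam) (k : ℕ) (s : Lam) :
    (Lam.lam u).subst k s = .lam (u.subst (k+1) (s.lift 0)) := rfl

/-- Graded simulation relation: `Sim k t t'` means `t'` is obtained from `t` by
replacing occurrences of `I` by `J` (or its reduction intermediates) and
inserting J-eta-expansions. -/
inductive Sim : ℕ → Lam → Lam → Prop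
  | var (k n : ℕ) : Sim k (.var n) (.var n)
  | lam {k t t'} : Sim k t t' → Sim (k+1) (.lam t) (.lam t')
  | app {k t t' s s'} : Sim k t t' → Sim k s s' → Sim (k+1) (.app t s) (.app t' s')
  | jbase (k : ℕ) : Sim k Iterm Jterm
  | jbase1 (k : ℕ) : Sim k Iterm (.app Bterm Gterm)
  | jbase2 (k : ℕ) : Sim k Iterm (.app Gterm Jterm)
  | japp {k t t'} : Sim k t t' → Sim (k+1) t (.app Jterm t')
  | japp1 {k t t'} : Sim k t t' → Sim (k+1) t (.app (.app Bterm Gterm) t')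
  | japp2 {k t t'} : Sim k t t' → Sim (k+1) t (.app (.app Gterm Jterm) t')
  | japp3 {k t t'} : Sim k t t' → Sim (k+1) t (.app J3term t')
  | jeta {k t t' s} : Sim k t t' → Sim k (.var 0) s → Sim (k+1) t (.lam (.app (t'.lift 0) s))

/-- ungraded version -/
def SimR (t t' : Lam) : Prop := ∃ k, Sim k t t'

theorem Sim.mono {k t t'} (h : Sim k t t') : Sim (k+1) t t' := by
  induction h with
  | var k n => exact Sim.var _ n
  | lam _ ih => exact ih.lam
  | app _ _ ih1 ih2 => exact ih1.app ih2
  | jbase k => exact Sim.jbase _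
  | jbase1 k => exact Sim.jbase1 _
  | jbase2 k => exact Sim.jbase2 _
  | japp _ ih => exact ih.japp
  | japp1 _ ih => exact ih.japp1
  | japp2 _ ih => exact ih.japp2
  | japp3 _ ih => exact ih.japp3
  | jeta _ _ ih1 ih2 => exact ih1.jeta ih2

theorem Sim.mono_le {k k' t t'} (h : Sim k t t') (hk : k ≤ k') : Sim k' t t' := by
  induction hk with
  | refl => exact h
  | step _ ih => exact ih.mono

theorem Sim.refl (t : Lam) : ∃ k, Sim k t t := by
  induction t with
  | var n => exact ⟨0, Sim.var 0 n⟩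
  | lam u ih => rcases ih with ⟨k, hk⟩; exact ⟨k+1, hk.lam⟩
  | app u v ihu ihv =>
    rcases ihu with ⟨k1, h1⟩; rcases ihv with ⟨k2, h2⟩
    exact ⟨max k1 k2 + 1, (h1.mono_le (le_max_left _ _)).app (h2.mono_le (le_max_right _ _))⟩

theorem SimR.refl (t : Lam) : SimR t t := Sim.refl t

theorem SimR.lam {t t'} (h : SimR t t') : SimR (.lam t) (.lam t') := by
  rcases h with ⟨k, h⟩; exact ⟨k+1, h.lam⟩

theorem SimR.app {t t' s s'} (h : SimR t t') (h2 : SimR s s') : SimR (.app t s) (.app t' s') := by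
  rcases h with ⟨k1, h1⟩; rcases h2 with ⟨k2, h2⟩
  exact ⟨max k1 k2 + 1, (h1.mono_le (le_max_left _ _)).app (h2.mono_le (le_max_right _ _))⟩

theorem SimR.japp {t t'} (h : SimR t t') : SimR t (.app Jterm t') := by
  rcases h with ⟨k, h⟩; exact ⟨k+1, h.japp⟩

theorem SimR.jeta {t t' s} (h : SimR t t') (hs : SimR (.var 0) s) :
    SimR t (.lam (.app (t'.lift 0) s)) := by
  rcases h with ⟨k1, h1⟩; rcases hs with ⟨k2, h2⟩
  exact ⟨max k1 k2 + 1, (h1.mono_le (le_max_left _ _)).jeta (h2.mono_le (le_max_right _ _))⟩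

/-- `Sim` is compatible with lifting, preserving the grade. -/
theorem Sim.lift_Sim {k t t'} (h : Sim k t t') : ∀ d, Sim k (t.lift d) (t'.lift d) := by
  induction h with
  | var k n => intro d; simp only [Lam.lift]; split_ifs <;> exact Sim.var _ _
  | lam _ ih => intro d; exact (ih (d+1)).lam
  | app _ _ ih1 ih2 => intro d; exact (ih1 d).app (ih2 d)
  | jbase k => intro d; rw [lift_I, lift_J]; exact Sim.jbase _
  | jbase1 k =>
    intro d
    rw [lift_I]; show Sim _ _ (Lam.lift (.app Bterm Gterm) d)
    simp only [lift_app, lift_B, lift_G]; exact Sim.jbase1 _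
  | jbase2 k =>
    intro d
    rw [lift_I]; show Sim _ _ (Lam.lift (.app Gterm Jterm) d)
    simp only [lift_app, lift_G, lift_J]; exact Sim.jbase2 _
  | japp _ ih =>
    intro d; show Sim _ _ (Lam.lift (.app Jterm _) d)
    simp only [lift_app, lift_J]; exact (ih d).japp
  | japp1 _ ih =>
    intro d; show Sim _ _ (Lam.lift (.app (.app Bterm Gterm) _) d)
    simp only [lift_app, lift_B, lift_G]; exact (ih d).japp1
  | japp2 _ ih =>
    intro d; show Sim _ _ (Lam.lift (.app (.app Gterm Jterm) _) d)
    simp only [lift_app, lift_G, lift_J]; exact (ih d).japp2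
  | japp3 _ ih =>
    intro d; show Sim _ _ (Lam.lift (.app J3term _) d)
    simp only [lift_app, lift_J3]; exact (ih d).japp3
  | jeta _ _ ih1 ih2 =>
    intro d
    rename_i k0 t0 t0' s0 _ _
    show Sim _ _ (Lam.lift (.lam (.app (t0'.lift 0) s0)) d)
    simp only [lift_lam, lift_app]
    rw [← lift_lift t0' d 0 (by omega)]
    have h2 := ih2 (d+1)
    have e0 : Lam.lift (.var 0) (d+1) = .var 0 := by simp only [Lam.lift]; norm_num
    rw [e0] at h2
    exact (ih1 d).jeta h2

theorem SimR.lift_SimR {t t'} (h : SimR t t') (d : ℕ) : SimR (t.lift d) (t'.lift d) := by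
  rcases h with ⟨k, h⟩; exact ⟨k, h.lift_Sim d⟩

/-- `Sim` is compatible with substitution. -/
theorem Sim.subst_Sim {k t t'} (h : Sim k t t') :
    ∀ {m s s'}, Sim m s s' → ∀ j, SimR (t.subst j s) (t'.subst j s') := by
  induction h with
  | var k n =>
    intro m s s' hs j
    simp only [Lam.subst]
    split_ifs
    · exact ⟨m, hs⟩
    · exact SimR.refl _
    · exact SimR.refl _
  | lam _ ih =>
    intro m s s' hs j
    simp only [Lam.subst]
    exact (ih (hs.lift_Sim 0) (j+1)).lam
  | app _ _ ih1 ih2 =>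
    intro m s s' hs j
    simp only [Lam.subst]
    exact (ih1 hs j).app (ih2 hs j)
  | jbase k =>
    intro m s s' hs j
    rw [subst_I, subst_J]; exact ⟨0, Sim.jbase 0⟩
  | jbase1 k =>
    intro m s s' hs j
    rw [subst_I]; show SimR _ (Lam.subst (.app Bterm Gterm) j s')
    simp only [subst_app, subst_B, subst_G]; exact ⟨0, Sim.jbase1 0⟩
  | jbase2 k =>
    intro m s s' hs j
    rw [subst_I]; show SimR _ (Lam.subst (.app Gterm Jterm) j s')
    simp only [subst_app, subst_G, subst_J]; exact ⟨0, Sim.jbase2 0⟩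
  | japp _ ih =>
    intro m s s' hs j
    show SimR _ (Lam.subst (.app Jterm _) j s')
    simp only [subst_app, subst_J]
    exact (ih hs j).japp
  | japp1 _ ih =>
    intro m s s' hs j
    show SimR _ (Lam.subst (.app (.app Bterm Gterm) _) j s')
    simp only [subst_app, subst_B, subst_G]
    rcases ih hs j with ⟨k', h'⟩
    exact ⟨k'+1, h'.japp1⟩
  | japp2 _ ih =>
    intro m s s' hs j
    show SimR _ (Lam.subst (.app (.app Gterm Jterm) _) j s')
    simp only [subst_app, subst_G, subst_J]
    rcases ih hs j with ⟨k', h'⟩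
    exact ⟨k'+1, h'.japp2⟩
  | japp3 _ ih =>
    intro m s s' hs j
    show SimR _ (Lam.subst (.app J3term _) j s')
    simp only [subst_app, subst_J3]
    rcases ih hs j with ⟨k', h'⟩
    exact ⟨k'+1, h'.japp3⟩
  | jeta _ _ ih1 ih2 =>
    intro m s s' hs j
    rename_i k0 t0 t0' s0 _ _
    show SimR _ (Lam.subst (.lam (.app (t0'.lift 0) s0)) j s')
    simp only [subst_lam, subst_app]
    rw [← lift_subst_le t0' 0 j s' (by omega)]
    have h2 := ih2 (hs.lift_Sim 0) (j+1)
    have e : Lam.subst (.var 0) (j+1) (s.lift 0) = .var 0 := by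
      simp only [Lam.subst]; norm_num
    rw [e] at h2
    exact (ih1 hs j).jeta h2

theorem SimR.subst_SimR {t t' s s'} (h : SimR t t') (hs : SimR s s') (j : ℕ) :
    SimR (t.subst j s) (t'.subst j s') := by
  rcases h with ⟨k, h⟩; rcases hs with ⟨m, hs⟩
  exact h.subst_Sim hs j
open Lam Relation

theorem subst_lift_up (t : Lam) : ∀ k, Lam.subst (t.lift (k+1)) k (.var k) = t := by
  induction t with
  | var n =>
    intro k; simp only [Lam.lift]
    split_ifs <;> simp only [Lam.subst] <;> split_ifs <;>
      first | omega | rfl | (congr 1; omega)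
  | lam u ih =>
    intro k
    show Lam.lam (Lam.subst (u.lift (k+2)) (k+1) (Lam.lift (.var k) 0)) = _
    have : Lam.lift (.var k) 0 = .var (k+1) := by simp only [Lam.lift]; norm_num
    rw [this, ih]
  | app u v ihu ihv => intro k; show Lam.app _ _ = _; rw [ihu, ihv]

theorem simR_eta_subst {a b s : Lam} (hab : SimR a b) (hs : SimR (.var 0) s) :
    SimR a (Lam.subst (b.lift 1) 0 s) := by
  have h := SimR.subst_SimR (hab.lift_SimR 1) hs 0
  rwa [subst_lift_up a 0] at h

theorem lamapp_star {t₀ b : Lam} (h : ReflTransGen Head t₀ (.lam b)) (s : Lam) :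
    ReflTransGen Head (.lam (.app (t₀.lift 0) s)) (.lam (Lam.subst (b.lift 1) 0 s)) := by
  have h1 : ReflTransGen Head (t₀.lift 0) (.lam (b.lift 1)) := star_lift h 0
  exact star_abs (head_appsim h1 s)

theorem star_appJ1 (t : Lam) : ReflTransGen Head (.app (.app Bterm Gterm) t) (etaJ t) := by
  refine ReflTransGen.head (step_J2.appL t (fun w => Lam.noConfusion)) ?_
  refine ReflTransGen.head (step_J3.appL t (fun w => Lam.noConfusion)) ?_
  exact ReflTransGen.single (step_J4 t)

theorem star_appJ2 (t : Lam) : ReflTransGen Head (.app (.app Gterm Jterm) t) (etaJ t) := by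
  refine ReflTransGen.head (step_J3.appL t (fun w => Lam.noConfusion)) ?_
  exact ReflTransGen.single (step_J4 t)

theorem star_appJ3 (t : Lam) : ReflTransGen Head (.app J3term t) (etaJ t) :=
  ReflTransGen.single (step_J4 t)

theorem simR_var0_appJvar0 : SimR (.var 0) (.app Jterm (.var 0)) :=
  ⟨1, (Sim.var 0 0).japp⟩

/-- `I` is simulated by `J3`'s body relation: `var 0 ~ λz. (var 1) (J z)`. -/
theorem simR_var0_J3body : SimR (.var 0) (.lam (.app (.var 1) (.app Jterm (.var 0)))) := by
  have h : SimR (.var 0) (.lam (.app ((Lam.var 0).lift 0) (.app Jterm (.var 0)))) :=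
    SimR.jeta (SimR.refl _) simR_var0_appJvar0
  exact h

theorem simR_I_J3 : SimR Iterm J3term := simR_var0_J3body.lam

/-- LAMSIM: anything simulating a `lam` reduces to a `lam` with simulating body. -/
theorem sim_lam_left {k : ℕ} {t u : Lam} (h : Sim k t u) :
    ∀ a, t = .lam a → ∃ b, ReflTransGen Head u (.lam b) ∧ SimR a b := by
  induction h with
  | var k n => intro a ha; cases ha
  | lam h _ => intro a ha; cases ha; exact ⟨_, ReflTransGen.refl, ⟨_, h⟩⟩
  | app _ _ _ _ => intro a ha; cases ha
  | jbase k =>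
    intro a ha
    rw [show Iterm = Lam.lam (.var 0) from rfl] at ha
    cases ha
    exact ⟨_, star_J_J3, simR_var0_J3body⟩
  | jbase1 k =>
    intro a ha
    rw [show Iterm = Lam.lam (.var 0) from rfl] at ha
    cases ha
    exact ⟨_, ReflTransGen.head step_J2 (ReflTransGen.single step_J3), simR_var0_J3body⟩
  | jbase2 k =>
    intro a ha
    rw [show Iterm = Lam.lam (.var 0) from rfl] at ha
    cases ha
    exact ⟨_, ReflTransGen.single step_J3, simR_var0_J3body⟩
  | japp _ ih =>
    intro a ha; subst ha
    rcases ih a rfl with ⟨b, hb, hab⟩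
    exact ⟨_, (star_appJ _).trans (lamapp_star hb _),
      simR_eta_subst hab simR_var0_appJvar0⟩
  | japp1 _ ih =>
    intro a ha; subst ha
    rcases ih a rfl with ⟨b, hb, hab⟩
    exact ⟨_, (star_appJ1 _).trans (lamapp_star hb _),
      simR_eta_subst hab simR_var0_appJvar0⟩
  | japp2 _ ih =>
    intro a ha; subst ha
    rcases ih a rfl with ⟨b, hb, hab⟩
    exact ⟨_, (star_appJ2 _).trans (lamapp_star hb _),
      simR_eta_subst hab simR_var0_appJvar0⟩
  | japp3 _ ih =>
    intro a ha; subst ha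
    rcases ih a rfl with ⟨b, hb, hab⟩
    exact ⟨_, (star_appJ3 _).trans (lamapp_star hb _),
      simR_eta_subst hab simR_var0_appJvar0⟩
  | jeta _ hs ih =>
    intro a ha; subst ha
    rcases ih a rfl with ⟨b, hb, hab⟩
    exact ⟨_, lamapp_star hb _, simR_eta_subst hab ⟨_, hs⟩⟩

theorem simR_lam_left {t' : Lam} {a : Lam} (h : SimR (.lam a) t') :
    ∃ b, ReflTransGen Head t' (.lam b) ∧ SimR a b := by
  rcases h with ⟨k, h⟩; exact sim_lam_left h a rfl

/-- ETA-BETA -/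
theorem sim_eta_beta {k : ℕ} {t u : Lam} (h : Sim k t u) :
    ∀ b s, u = .lam b → SimR (.var 0) s → SimR t (.lam (Lam.subst (b.lift 1) 0 s)) := by
  induction h with
  | var k n => intro b s hb _; cases hb
  | lam h _ =>
    intro b s hb hs; cases hb
    exact (simR_eta_subst ⟨_, h⟩ hs).lam
  | app _ _ _ _ => intro b s hb _; cases hb
  | jbase k => intro b s hb _; rw [show Jterm = Lam.app thetaTerm Gterm from rfl] at hb; cases hb
  | jbase1 k => intro b s hb _; cases hb
  | jbase2 k => intro b s hb _; cases hb
  | japp _ _ => intro b s hb _; cases hb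
  | japp1 _ _ => intro b s hb _; cases hb
  | japp2 _ _ => intro b s hb _; cases hb
  | japp3 _ _ => intro b s hb _; cases hb
  | jeta h hs1 ih ih2 =>
    intro b s hb hs
    rename_i k0 t1 s1
    cases hb
    have e1 : Lam.subst (Lam.lift (.app (t1.lift 0) s1) 1) 0 s
        = .app (t1.lift 0) (Lam.subst (s1.lift 1) 0 s) := by
      show Lam.app (Lam.subst (Lam.lift (t1.lift 0) 1) 0 s) _ = _
      rw [← lift_lift t1 0 0 (le_refl 0), subst_lift]
    rw [e1]
    have hs1' : SimR (.var 0) (Lam.subst (s1.lift 1) 0 s) := by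
      have h2 := SimR.subst_SimR (SimR.lift_SimR ⟨_, hs1⟩ 1) hs 0
      exact h2
    exact SimR.jeta ⟨_, h⟩ hs1'

theorem simR_eta_beta {t b s : Lam} (h : SimR t (.lam b)) (hs : SimR (.var 0) s) :
    SimR t (.lam (Lam.subst (b.lift 1) 0 s)) := by
  rcases h with ⟨k, h⟩; exact sim_eta_beta h b s rfl hs

/-- INV-LAM -/
theorem sim_lam_right {k : ℕ} {t u : Lam} (h : Sim k t u) :
    ∀ m, u = .lam m →
      (∃ a, t = .lam a) ∨ ∃ t₁ s, m = .app (t₁.lift 0) s ∧ SimR t t₁ ∧ SimR (.var 0) s := by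
  induction h with
  | var k n => intro m hm; cases hm
  | lam _ _ => intro m hm; exact Or.inl ⟨_, rfl⟩
  | app _ _ _ _ => intro m hm; cases hm
  | jbase k => intro m hm; exact Or.inl ⟨_, rfl⟩
  | jbase1 k => intro m hm; exact Or.inl ⟨_, rfl⟩
  | jbase2 k => intro m hm; exact Or.inl ⟨_, rfl⟩
  | japp _ _ => intro m hm; cases hm
  | japp1 _ _ => intro m hm; cases hm
  | japp2 _ _ => intro m hm; cases hm
  | japp3 _ _ => intro m hm; cases hm
  | jeta h hs _ =>
    intro m hm; cases hm
    exact Or.inr ⟨_, _, rfl, ⟨_, h⟩, ⟨_, hs⟩⟩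

theorem not_varApp_theta : ¬ VarApp thetaTerm := by
  rw [show thetaTerm = Lam.app deltaTerm deltaTerm from rfl]
  intro h
  rcases h with _ | ⟨_, h⟩
  rw [show deltaTerm = Lam.lam _ from rfl] at h
  cases h

theorem not_varApp_J : ¬ VarApp Jterm := by
  rw [show Jterm = Lam.app thetaTerm Gterm from rfl]
  intro h
  rcases h with _ | ⟨_, h⟩
  exact not_varApp_theta h

/-- VARAPP-BWD -/
theorem sim_varapp_right {k : ℕ} {t u : Lam} (h : Sim k t u) : VarApp u → VarApp t := by
  induction h with
  | var k n => intro _; exact VarApp.var n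
  | lam _ _ => intro hv; cases hv
  | app _ _ ih1 _ =>
    intro hv
    rcases hv with _ | ⟨_, hv⟩
    exact (ih1 hv).app _
  | jbase k => intro hv; exact absurd hv not_varApp_J
  | jbase1 k =>
    intro hv; rcases hv with _ | ⟨_, hv⟩
    rw [show Bterm = Lam.lam _ from rfl] at hv; cases hv
  | jbase2 k =>
    intro hv; rcases hv with _ | ⟨_, hv⟩
    rw [show Gterm = Lam.lam _ from rfl] at hv; cases hv
  | japp _ _ =>
    intro hv; rcases hv with _ | ⟨_, hv⟩
    exact absurd hv not_varApp_J
  | japp1 _ _ =>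
    intro hv; rcases hv with _ | ⟨_, hv⟩
    rcases hv with _ | ⟨_, hv⟩
    rw [show Bterm = Lam.lam _ from rfl] at hv; cases hv
  | japp2 _ _ =>
    intro hv; rcases hv with _ | ⟨_, hv⟩
    rcases hv with _ | ⟨_, hv⟩
    rw [show Gterm = Lam.lam _ from rfl] at hv; cases hv
  | japp3 _ _ =>
    intro hv; rcases hv with _ | ⟨_, hv⟩
    rw [show J3term = Lam.lam _ from rfl] at hv; cases hv
  | jeta _ _ _ _ => intro hv; cases hv

theorem simR_varapp_right {t u : Lam} (h : SimR t u) (hv : VarApp u) : VarApp t := by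
  rcases h with ⟨k, h⟩; exact sim_varapp_right h hv

theorem varApp_lift_rev {t : Lam} {d : ℕ} (h : VarApp (t.lift d)) : VarApp t := by
  induction t with
  | var n => exact VarApp.var n
  | lam u _ => rw [lift_lam] at h; cases h
  | app u v ihu _ =>
    rw [lift_app] at h
    rcases h with _ | ⟨_, h⟩
    exact (ihu h).app _
open Lam Relation

theorem not_varApp_I : ¬ VarApp Iterm := by
  rw [show Iterm = Lam.lam (.var 0) from rfl]; intro h; cases h

theorem apps_cons (x a : Lam) (rest : List Lam) :
    apps x (a :: rest) = apps (.app x a) rest := rfl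

/-- four head steps `(J t₀) a₁ ... → (etaJ t₀) a₁ ...` under any arguments -/
theorem star_apps_appJ (t₀ : Lam) (args : List Lam) :
    ReflTransGen Head (apps (.app Jterm t₀) args) (apps (etaJ t₀) args) := by
  refine ReflTransGen.head (head_apps (step_J1.appL t₀ J_nonlam) (fun w => Lam.noConfusion) args) ?_
  refine ReflTransGen.head (head_apps (step_J2.appL t₀ (fun w => Lam.noConfusion)) (fun w => Lam.noConfusion) args) ?_
  refine ReflTransGen.head (head_apps (step_J3.appL t₀ (fun w => Lam.noConfusion)) (fun w => Lam.noConfusion) args) ?_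
  exact ReflTransGen.single (head_apps (step_J4 t₀) (fun w => Lam.noConfusion) args)

theorem star_apps_appJ1 (t₀ : Lam) (args : List Lam) :
    ReflTransGen Head (apps (.app (.app Bterm Gterm) t₀) args) (apps (etaJ t₀) args) := by
  refine ReflTransGen.head (head_apps (step_J2.appL t₀ (fun w => Lam.noConfusion)) (fun w => Lam.noConfusion) args) ?_
  refine ReflTransGen.head (head_apps (step_J3.appL t₀ (fun w => Lam.noConfusion)) (fun w => Lam.noConfusion) args) ?_
  exact ReflTransGen.single (head_apps (step_J4 t₀) (fun w => Lam.noConfusion) args)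

theorem star_apps_appJ2 (t₀ : Lam) (args : List Lam) :
    ReflTransGen Head (apps (.app (.app Gterm Jterm) t₀) args) (apps (etaJ t₀) args) := by
  refine ReflTransGen.head (head_apps (step_J3.appL t₀ (fun w => Lam.noConfusion)) (fun w => Lam.noConfusion) args) ?_
  exact ReflTransGen.single (head_apps (step_J4 t₀) (fun w => Lam.noConfusion) args)

theorem star_apps_appJ3 (t₀ : Lam) (args : List Lam) :
    ReflTransGen Head (apps (.app J3term t₀) args) (apps (etaJ t₀) args) :=
  ReflTransGen.single (head_apps (step_J4 t₀) (fun w => Lam.noConfusion) args)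

theorem step_apps_etaJ (t₀ a : Lam) (rest : List Lam) :
    Head (apps (.app (etaJ t₀) a) rest) (apps (.app t₀ (.app Jterm a)) rest) :=
  head_apps (step_etaJ t₀ a) (fun w => Lam.noConfusion) rest

theorem subst_etaJ_body (t₀ s a : Lam) :
    Lam.subst (.app (t₀.lift 0) s) 0 a = .app t₀ (s.subst 0 a) := by
  show Lam.app (Lam.subst (t₀.lift 0) 0 a) _ = _
  rw [subst_lift]

/-- a term related to a var-headed application is solvable under any arguments -/
theorem sim_varapp_solvable :
    ∀ n : ℕ, ∀ {t t' : Lam}, Sim n t t' → VarApp t → ∀ args, Solvable (apps t' args) := by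
  intro n
  induction n using Nat.strong_induction_on with
  | _ n IH =>
  intro t t' h hv args
  cases h with
  | var k m => exact ⟨_, ReflTransGen.refl, Hnf.base (varApp_apps (VarApp.var m) args)⟩
  | lam h => cases hv
  | app h1 h2 =>
    rcases hv with _ | ⟨_, hv⟩
    exact IH _ (by omega) h1 hv (_ :: args)
  | jbase k => exact absurd hv not_varApp_I
  | jbase1 k => exact absurd hv not_varApp_I
  | jbase2 k => exact absurd hv not_varApp_I
  | japp h =>
    cases args with
    | nil =>
      refine solvable_star (star_appJ _) (solvable_lam ?_)
      exact IH _ (by omega) (h.lift_Sim 0) (hv.lift 0) [.app Jterm (.var 0)]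
    | cons a rest =>
      refine solvable_star (star_apps_appJ _ (a :: rest)) ?_
      refine solvable_star (ReflTransGen.single (step_apps_etaJ _ a rest)) ?_
      exact IH _ (by omega) h hv (.app Jterm a :: rest)
  | japp1 h =>
    cases args with
    | nil =>
      refine solvable_star (star_appJ1 _) (solvable_lam ?_)
      exact IH _ (by omega) (h.lift_Sim 0) (hv.lift 0) [.app Jterm (.var 0)]
    | cons a rest =>
      refine solvable_star (star_apps_appJ1 _ (a :: rest)) ?_
      refine solvable_star (ReflTransGen.single (step_apps_etaJ _ a rest)) ?_
      exact IH _ (by omega) h hv (.app Jterm a :: rest)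
  | japp2 h =>
    cases args with
    | nil =>
      refine solvable_star (star_appJ2 _) (solvable_lam ?_)
      exact IH _ (by omega) (h.lift_Sim 0) (hv.lift 0) [.app Jterm (.var 0)]
    | cons a rest =>
      refine solvable_star (star_apps_appJ2 _ (a :: rest)) ?_
      refine solvable_star (ReflTransGen.single (step_apps_etaJ _ a rest)) ?_
      exact IH _ (by omega) h hv (.app Jterm a :: rest)
  | japp3 h =>
    cases args with
    | nil =>
      refine solvable_star (star_appJ3 _) (solvable_lam ?_)
      exact IH _ (by omega) (h.lift_Sim 0) (hv.lift 0) [.app Jterm (.var 0)]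
    | cons a rest =>
      refine solvable_star (star_apps_appJ3 _ (a :: rest)) ?_
      refine solvable_star (ReflTransGen.single (step_apps_etaJ _ a rest)) ?_
      exact IH _ (by omega) h hv (.app Jterm a :: rest)
  | jeta h hs =>
    rename_i k t1 s1
    cases args with
    | nil =>
      refine solvable_lam ?_
      exact IH _ (by omega) (h.lift_Sim 0) (hv.lift 0) [s1]
    | cons a rest =>
      have hstep : Head (apps (.app (.lam (.app (t1.lift 0) s1)) a) rest)
          (apps (.app t1 (s1.subst 0 a)) rest) := by
        have hb := Head.beta (.app (t1.lift 0) s1) a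
        rw [subst_etaJ_body] at hb
        exact head_apps hb (fun w => Lam.noConfusion) rest
      refine solvable_star (ReflTransGen.single hstep) ?_
      exact IH _ (by omega) h hv ((s1.subst 0 a) :: rest)

/-- forward HNF transfer -/
theorem simR_hnf_fwd {t t' : Lam} (h : SimR t t') (hn : Hnf t) : Solvable t' := by
  induction hn generalizing t' with
  | base hv =>
    rcases h with ⟨k, h⟩
    exact sim_varapp_solvable k h hv []
  | lam _ ih =>
    rcases simR_lam_left h with ⟨b, hb, hab⟩
    exact solvable_star hb (solvable_lam (ih hab))
open Lam Relation

theorem not_head_I {u : Lam} (h : Head Iterm u) : False := by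
  rw [show Iterm = Lam.lam (.var 0) from rfl] at h
  rcases h with _ | _ | ⟨h0⟩
  · cases ‹Head (Lam.var 0) _›

theorem subst_var0 (b : Lam) : Lam.subst (.var 0) 0 b = b := rfl

/-- tracking a reduction of `t₀` inside the eta gadget `λz. t₀↑ s` -/
theorem etaJ_track {t₀ w₀ w s : Lam} (hw₀ : ReflTransGen Head t₀ w₀) (hsim : SimR w w₀)
    (hs : SimR (.var 0) s) :
    ∃ w', ReflTransGen Head (.lam (.app (t₀.lift 0) s)) w' ∧ SimR w w' := by
  rcases head_split (star_lift hw₀ 0) s with ⟨p, hp, hl⟩ | ⟨_, hl⟩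
  · rcases lift_eq_lam hp with ⟨p₀, rfl, rfl⟩
    refine ⟨.lam (Lam.subst (p₀.lift 1) 0 s), star_abs hl, ?_⟩
    have : (0:ℕ) + 1 = 1 := rfl
    rw [this] at *
    exact simR_eta_beta hsim hs
  · exact ⟨.lam (.app (w₀.lift 0) s), star_abs hl, SimR.jeta hsim hs⟩

/-- FORWARD one-step simulation -/
theorem sim_fwd_step {n : ℕ} {t t' : Lam} (h : Sim n t t') :
    ∀ {u}, Head t u →
      ∃ w w', ReflTransGen Head u w ∧ ReflTransGen Head t' w' ∧ SimR w w' := by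
  induction h with
  | var k m => intro u hu; cases hu
  | jbase k => intro u hu; exact absurd hu not_head_I
  | jbase1 k => intro u hu; exact absurd hu not_head_I
  | jbase2 k => intro u hu; exact absurd hu not_head_I
  | lam h ih =>
    intro u hu
    cases hu with
    | abs hu0 =>
      rcases ih hu0 with ⟨w, w', hw, hw', hsim⟩
      exact ⟨.lam w, .lam w', star_abs hw, star_abs hw', hsim.lam⟩
  | app h1 h2 ih1 ih2 =>
    rename_i k a a' b b'
    intro u hu
    cases hu with
    | beta a₀ =>
      rcases simR_lam_left ⟨k, h1⟩ with ⟨c, hc, hac⟩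
      exact ⟨_, Lam.subst c 0 b', ReflTransGen.refl, head_appsim hc b',
        SimR.subst_SimR hac ⟨k, h2⟩ 0⟩
    | appL _ ha hnl =>
      rcases ih1 ha with ⟨wa, wa', hwa, hwa', hsim⟩
      rcases head_split hwa b with ⟨p, rfl, hl⟩ | ⟨hnlw, hl⟩
      · rcases simR_lam_left hsim with ⟨p', hp', hpp'⟩
        exact ⟨Lam.subst p 0 b, Lam.subst p' 0 b', hl,
          head_appsim (hwa'.trans hp') b', SimR.subst_SimR hpp' ⟨_, h2⟩ 0⟩
      · rcases head_split hwa' b' with ⟨m, rfl, hr⟩ | ⟨_, hr⟩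
        · rcases hsim with ⟨kk, hsimk⟩
          rcases sim_lam_right hsimk m rfl with ⟨aa, rfl⟩ | ⟨t₁, s, rfl, hwt, hvs⟩
          · exact absurd rfl (hnlw aa)
          · rw [subst_etaJ_body] at hr
            refine ⟨.app wa b, .app t₁ (Lam.subst s 0 b'), hl, hr, ?_⟩
            refine SimR.app hwt ?_
            have hb2 := SimR.subst_SimR hvs ⟨_, h2⟩ 0
            rwa [subst_var0] at hb2
        · exact ⟨.app wa b, .app wa' b', hl, hr, hsim.app ⟨_, h2⟩⟩
  | japp h ih =>
    intro u hu
    rcases ih hu with ⟨w, w₀, hw, hw₀, hsim⟩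
    rcases etaJ_track hw₀ hsim simR_var0_appJvar0 with ⟨w', hw', hsim'⟩
    exact ⟨w, w', hw, (star_appJ _).trans hw', hsim'⟩
  | japp1 h ih =>
    intro u hu
    rcases ih hu with ⟨w, w₀, hw, hw₀, hsim⟩
    rcases etaJ_track hw₀ hsim simR_var0_appJvar0 with ⟨w', hw', hsim'⟩
    exact ⟨w, w', hw, (star_appJ1 _).trans hw', hsim'⟩
  | japp2 h ih =>
    intro u hu
    rcases ih hu with ⟨w, w₀, hw, hw₀, hsim⟩
    rcases etaJ_track hw₀ hsim simR_var0_appJvar0 with ⟨w', hw', hsim'⟩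
    exact ⟨w, w', hw, (star_appJ2 _).trans hw', hsim'⟩
  | japp3 h ih =>
    intro u hu
    rcases ih hu with ⟨w, w₀, hw, hw₀, hsim⟩
    rcases etaJ_track hw₀ hsim simR_var0_appJvar0 with ⟨w', hw', hsim'⟩
    exact ⟨w, w', hw, (star_appJ3 _).trans hw', hsim'⟩
  | jeta h hs ih ihs =>
    intro u hu
    rcases ih hu with ⟨w, w₀, hw, hw₀, hsim⟩
    rcases etaJ_track hw₀ hsim ⟨_, hs⟩ with ⟨w', hw', hsim'⟩
    exact ⟨w, w', hw, hw', hsim'⟩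
open Lam Relation

theorem star_drop {x y z : Lam} (hxz : ReflTransGen Head x z) (hxy : Head x y) :
    x = z ∨ ReflTransGen Head y z := by
  induction hxz using ReflTransGen.head_induction_on with
  | refl => exact Or.inl rfl
  | head h' rest _ =>
    right
    rwa [hxy.det h']

/-- BACKWARD one-step simulation -/
theorem sim_bwd_step {n : ℕ} {t t' : Lam} (h : Sim n t t') :
    ∀ {u'}, Head t' u' →
      SimR t u' ∨ ∃ u w w', Head t u ∧ ReflTransGen Head u w ∧
        ReflTransGen Head u' w' ∧ SimR w w' := by
  induction h with
  | var k m => intro u' hu'; cases hu'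
  | jbase k =>
    intro u' hu'
    rw [hu'.det step_J1]
    exact Or.inl ⟨0, Sim.jbase1 0⟩
  | jbase1 k =>
    intro u' hu'
    rw [hu'.det step_J2]
    exact Or.inl ⟨0, Sim.jbase2 0⟩
  | jbase2 k =>
    intro u' hu'
    rw [hu'.det step_J3]
    exact Or.inl simR_I_J3
  | lam h ih =>
    intro u' hu'
    cases hu' with
    | abs hu0 =>
      rcases ih hu0 with hL | ⟨u, w, w', hu, hw, hw', hsim⟩
      · exact Or.inl hL.lam
      · exact Or.inr ⟨.lam u, .lam w, .lam w', hu.abs, star_abs hw, star_abs hw', hsim.lam⟩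
  | app h1 h2 ih1 ih2 =>
    rename_i k a a' b b'
    intro u' hu'
    cases hu' with
    | beta m' =>
      rcases sim_lam_right h1 m' rfl with ⟨a₀, rfl⟩ | ⟨t₁, s, rfl, hat, hvs⟩
      · rcases simR_lam_left ⟨k, h1⟩ with ⟨c, hc, hac⟩
        rcases lam_star_inv hc with ⟨c', hc', hcc'⟩
        injection hc' with hcc
        refine Or.inr ⟨Lam.subst a₀ 0 b, Lam.subst a₀ 0 b, Lam.subst c 0 b',
          Head.beta a₀ b, ReflTransGen.refl, star_subst (hcc ▸ hcc') 0 b', ?_⟩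
        exact SimR.subst_SimR hac ⟨k, h2⟩ 0
      · rw [subst_etaJ_body]
        refine Or.inl (SimR.app hat ?_)
        have hb2 := SimR.subst_SimR hvs ⟨_, h2⟩ 0
        rwa [subst_var0] at hb2
    | appL _ ha' hnl' =>
      rename_i ua'
      rcases ih1 ha' with hL | ⟨ua, wa, wa', hua, hwa, hwa', hsim⟩
      · exact Or.inl (hL.app ⟨_, h2⟩)
      · cases a with
        | var m => exact absurd hua (by intro hh; cases hh)
        | lam a₀ =>
          rcases simR_lam_left ⟨k, h1⟩ with ⟨c, hc, hac⟩
          rcases star_drop hc ha' with heq | hstep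
          · exact absurd heq (hnl' c)
          · refine Or.inr ⟨Lam.subst a₀ 0 b, Lam.subst a₀ 0 b, Lam.subst c 0 b',
              Head.beta a₀ b, ReflTransGen.refl, head_appsim hstep b', ?_⟩
            exact SimR.subst_SimR hac ⟨k, h2⟩ 0
        | app a1 a2 =>
          rcases head_split hwa b with ⟨p, rfl, hl⟩ | ⟨hnlw, hl⟩
          · rcases simR_lam_left hsim with ⟨p', hp', hpp'⟩
            refine Or.inr ⟨.app ua b, Lam.subst p 0 b, Lam.subst p' 0 b',
              hua.appL b (fun w => Lam.noConfusion), hl,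
              head_appsim (hwa'.trans hp') b', ?_⟩
            exact SimR.subst_SimR hpp' ⟨_, h2⟩ 0
          · rcases head_split hwa' b' with ⟨m, rfl, hr⟩ | ⟨_, hr⟩
            · rcases hsim with ⟨kk, hsimk⟩
              rcases sim_lam_right hsimk m rfl with ⟨aa, rfl⟩ | ⟨t₁, s, rfl, hwt, hvs⟩
              · exact absurd rfl (hnlw aa)
              · rw [subst_etaJ_body] at hr
                refine Or.inr ⟨.app ua b, .app wa b, .app t₁ (Lam.subst s 0 b'),
                  hua.appL b (fun w => Lam.noConfusion), hl, hr, ?_⟩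
                refine SimR.app hwt ?_
                have hb2 := SimR.subst_SimR hvs ⟨_, h2⟩ 0
                rwa [subst_var0] at hb2
            · exact Or.inr ⟨.app ua b, .app wa b, .app wa' b',
                hua.appL b (fun w => Lam.noConfusion), hl, hr, hsim.app ⟨_, h2⟩⟩
  | japp h ih =>
    intro u' hu'
    rw [hu'.det (step_J1.appL _ J_nonlam)]
    exact Or.inl ⟨_, h.japp1⟩
  | japp1 h ih =>
    intro u' hu'
    rw [hu'.det (step_J2.appL _ (fun w => Lam.noConfusion))]
    exact Or.inl ⟨_, h.japp2⟩
  | japp2 h ih =>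
    intro u' hu'
    rw [hu'.det (step_J3.appL _ (fun w => Lam.noConfusion))]
    exact Or.inl ⟨_, h.japp3⟩
  | japp3 h ih =>
    intro u' hu'
    rw [hu'.det (step_J4 _)]
    show SimR _ (.lam (.app _ (.app Jterm (.var 0)))) ∨ _
    exact Or.inl (SimR.jeta ⟨_, h⟩ simR_var0_appJvar0)
  | jeta h hs ih ihs =>
    rename_i k t₀ s
    intro u' hu'
    cases hu' with
    | abs hu0 =>
      generalize hg : t₀.lift 0 = L at hu0
      cases hu0 with
      | beta c =>
        rcases lift_eq_lam hg with ⟨c₀, rfl, rfl⟩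
        refine Or.inl ?_
        have e : (0:ℕ) + 1 = 1 := rfl
        rw [e]
        exact simR_eta_beta ⟨_, h⟩ ⟨_, hs⟩
      | appL _ hL hnlL =>
        rw [← hg] at hL
        rcases head_lift_rev hL with ⟨X₀, hX₀, rfl⟩
        rcases ih hX₀ with hL2 | ⟨u, w, w₀, hu, hw, hw₀, hsim⟩
        · exact Or.inl (SimR.jeta hL2 ⟨_, hs⟩)
        · rcases etaJ_track hw₀ hsim ⟨_, hs⟩ with ⟨w', hw', hsim'⟩
          exact Or.inr ⟨u, w, w', hu, hw, hw', hsim'⟩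
open Lam Relation

/-- backward HNF transfer -/
theorem sim_hnf_bwd {k : ℕ} {t u : Lam} (h : Sim k t u) : Hnf u → Solvable t := by
  induction h with
  | var k m => intro _; exact ⟨_, ReflTransGen.refl, Hnf.base (VarApp.var m)⟩
  | lam h ih =>
    intro hn
    cases hn with
    | base hv => cases hv
    | lam hn0 => exact solvable_lam (ih hn0)
  | app h1 h2 ih1 ih2 =>
    intro hn
    cases hn with
    | base hv =>
      rcases hv with _ | ⟨_, hv⟩
      have hva := sim_varapp_right h1 hv
      exact ⟨_, ReflTransGen.refl, Hnf.base (hva.app _)⟩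
  | jbase k =>
    intro hn
    cases hn with
    | base hv => exact absurd hv not_varApp_J
  | jbase1 k =>
    intro hn
    cases hn with
    | base hv =>
      rcases hv with _ | ⟨_, hv⟩
      rw [show Bterm = Lam.lam _ from rfl] at hv; cases hv
  | jbase2 k =>
    intro hn
    cases hn with
    | base hv =>
      rcases hv with _ | ⟨_, hv⟩
      rw [show Gterm = Lam.lam _ from rfl] at hv; cases hv
  | japp h ih =>
    intro hn
    cases hn with
    | base hv =>
      rcases hv with _ | ⟨_, hv⟩
      exact absurd hv not_varApp_J
  | japp1 h ih =>
    intro hn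
    cases hn with
    | base hv =>
      rcases hv with _ | ⟨_, hv⟩
      rcases hv with _ | ⟨_, hv⟩
      rw [show Bterm = Lam.lam _ from rfl] at hv; cases hv
  | japp2 h ih =>
    intro hn
    cases hn with
    | base hv =>
      rcases hv with _ | ⟨_, hv⟩
      rcases hv with _ | ⟨_, hv⟩
      rw [show Gterm = Lam.lam _ from rfl] at hv; cases hv
  | japp3 h ih =>
    intro hn
    cases hn with
    | base hv =>
      rcases hv with _ | ⟨_, hv⟩
      rw [show J3term = Lam.lam _ from rfl] at hv; cases hv
  | jeta h hs ih ihs =>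
    intro hn
    cases hn with
    | base hv => cases hv
    | lam hn0 =>
      cases hn0 with
      | base hv =>
        rcases hv with _ | ⟨_, hv⟩
        have hv₀ := varApp_lift_rev hv
        have hvt := sim_varapp_right h hv₀
        exact ⟨_, ReflTransGen.refl, Hnf.base hvt⟩

theorem simR_hnf_bwd {t u : Lam} (h : SimR t u) (hn : Hnf u) : Solvable t := by
  rcases h with ⟨k, h⟩; exact sim_hnf_bwd h hn

theorem main_fwd : ∀ n : ℕ, ∀ {t t' : Lam}, SolvN n t → SimR t t' → Solvable t' := by
  intro n
  induction n with
  | zero => intro t t' h hs; exact simR_hnf_fwd hs h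
  | succ n ih =>
    intro t t' h hs
    rcases h with hh | ⟨u, hu, hn⟩
    · exact simR_hnf_fwd hs hh
    · rcases hs with ⟨k, hsk⟩
      rcases sim_fwd_step hsk hu with ⟨w, w', hw, hw', hsim⟩
      exact solvable_star hw' (ih (SolvN.star hw n hn) hsim)

theorem main_bwd : ∀ n : ℕ, ∀ {t t' : Lam}, SolvN n t' → SimR t t' → Solvable t := by
  intro n
  induction n with
  | zero => intro t t' h hs; exact simR_hnf_bwd hs h
  | succ n ih =>
    intro t t' h hs
    rcases h with hh | ⟨u', hu', hn⟩
    · exact simR_hnf_bwd hs hh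
    · rcases hs with ⟨k, hsk⟩
      rcases sim_bwd_step hsk hu' with hL | ⟨u, w, w', hu, hw, hw', hsim⟩
      · exact ih hn hL
      · have hsw : Solvable w := ih (SolvN.star hw' n hn) hsim
        exact solvable_star (ReflTransGen.single hu) (solvable_star hw hsw)

theorem simR_plug (C : Ctx) : SimR (C.plug Iterm) (C.plug Jterm) := by
  induction C with
  | hole => exact ⟨0, Sim.jbase 0⟩
  | lam c ih => exact ih.lam
  | appL c v ih => exact ih.app (SimR.refl v)
  | appR u c ih => exact (SimR.refl u).app ih

/-- `I` and `J` are operationally equivalent. -/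
theorem I_operationally_equivalent_J (C : Ctx) :
    Lam.Solvable (C.plug Iterm) ↔ Lam.Solvable (C.plug Jterm) := by
  constructor
  · intro hs
    rcases solvable_iff_solvN.mp hs with ⟨n, hn⟩
    exact main_fwd n hn (simR_plug C)
  · intro hs
    rcases solvable_iff_solvN.mp hs with ⟨n, hn⟩
    exact main_bwd n hn (simR_plug C)
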